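/- Under the nonlinear fixed-point iteration setup and RRE setup with ε_n ≠ 0, suppose ‖W̃⁺‖·‖ε_n‖ ≤ η, ‖W̃⁺‖·‖W − W̃‖ ≤ Δ₀ < 1, and additionally that s̃_{n,k} = s (as happens when k equals the degree of the minimal polynomial of F̃ with respect to ε_n). Then there exists τ > 0 depending only on a, L, η, Δ₀ such that ‖s_{n,k} − s‖ ≤ τ·(Lⁿ‖ε₀‖ + C_n‖ε₀‖²)², where C_n = a·L^{n−1}·(1 − Lⁿ)/(1 − L) for n ≥ 1 and C₀ = 0. -/

import Mathlib

open scoped Matrix Matrix.Norms.L2Operator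

/-- Moore–Penrose inverse of a full-column-rank matrix: `K⁺ = (KᴴK)⁻¹Kᴴ`. -/
noncomputable def pinv {m n : ℕ} (A : Matrix (Fin m) (Fin n) ℂ) : Matrix (Fin n) (Fin m) ℂ :=
  (Aᴴ * A)⁻¹ * Aᴴ

/-- A matrix acting on Euclidean vectors. -/
noncomputable def appE {m n : ℕ} (A : Matrix (Fin m) (Fin n) ℂ)
    (v : EuclideanSpace ℂ (Fin n)) : EuclideanSpace ℂ (Fin m) :=
  Matrix.toEuclideanLin A v

/-- The `N×k` matrix `U` with columns the first differences `u_{n+j} = x_{n+j+1} − x_{n+j}`,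
`j = 0,…,k−1`. -/
noncomputable def Umat (N k n : ℕ) (x : ℕ → EuclideanSpace ℂ (Fin N)) :
    Matrix (Fin N) (Fin k) ℂ :=
  Matrix.of fun p j => (x (n + (j : ℕ) + 1) - x (n + (j : ℕ))) p

/-- The `N×k` matrix `W` with columns the second differences
`w_{n+j} = u_{n+j+1} − u_{n+j}`, `j = 0,…,k−1`. -/
noncomputable def Wmat (N k n : ℕ) (x : ℕ → EuclideanSpace ℂ (Fin N)) :
    Matrix (Fin N) (Fin k) ℂ :=
  Matrix.of fun p j =>
    ((x (n + (j : ℕ) + 2) - x (n + (j : ℕ) + 1))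
      - (x (n + (j : ℕ) + 1) - x (n + (j : ℕ)))) p

/-- The `N×k` matrix `Ũ` with columns `ũ_{n+j} = F̃ʲ(F̃ − I) ε_n` coming from the linear
iteration `x̃_n = x_n`, `x̃_{m+1} = s + F̃(x̃_m − s)`. -/
noncomputable def UmatT (N k : ℕ)
    (F : EuclideanSpace ℂ (Fin N) →L[ℂ] EuclideanSpace ℂ (Fin N))
    (ε : EuclideanSpace ℂ (Fin N)) : Matrix (Fin N) (Fin k) ℂ :=
  Matrix.of fun p j => ((F ^ (j : ℕ) * (F - 1)) ε) p

/-- The `N×k` matrix `W̃` with columns `w̃_{n+j} = F̃ʲ(F̃ − I)² ε_n` coming from the linear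
iteration `x̃_n = x_n`, `x̃_{m+1} = s + F̃(x̃_m − s)`. -/
noncomputable def WmatT (N k : ℕ)
    (F : EuclideanSpace ℂ (Fin N) →L[ℂ] EuclideanSpace ℂ (Fin N))
    (ε : EuclideanSpace ℂ (Fin N)) : Matrix (Fin N) (Fin k) ℂ :=
  Matrix.of fun p j =>
    ((F ^ (j : ℕ) * (F - 1) ^ 2 :
      EuclideanSpace ℂ (Fin N) →L[ℂ] EuclideanSpace ℂ (Fin N)) ε) p

/-- The RRE approximation `s_{n,k} = x_n − U W⁺ u_n`. -/
noncomputable def sRRE (N k n : ℕ) (x : ℕ → EuclideanSpace ℂ (Fin N)) :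
    EuclideanSpace ℂ (Fin N) :=
  x n - appE (Umat N k n x) (appE (pinv (Wmat N k n x)) (x (n + 1) - x n))

/-- The RRE approximation `s̃_{n,k} = x_n − Ũ W̃⁺ ũ_n` for the linear iteration
`x̃_n = x_n`, `x̃_{m+1} = s + F̃(x̃_m − s)`, whose first difference at `n` is
`ũ_n = (F̃ − I)(x_n − s)`. -/
noncomputable def sRREt (N k n : ℕ)
    (F : EuclideanSpace ℂ (Fin N) →L[ℂ] EuclideanSpace ℂ (Fin N))
    (s : EuclideanSpace ℂ (Fin N)) (x : ℕ → EuclideanSpace ℂ (Fin N)) :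
    EuclideanSpace ℂ (Fin N) :=
  x n - appE (UmatT N k F (x n - s))
    (appE (pinv (WmatT N k F (x n - s))) ((F - 1) (x n - s)))

/-- `C₀ = 0` and `C_n = a·L^{n−1}·(1 − Lⁿ)/(1 − L)` for `n ≥ 1`. -/
noncomputable def Cconst (a L : ℝ) : ℕ → ℝ
  | 0 => 0
  | n + 1 => a * L ^ n * (1 - L ^ (n + 1)) / (1 - L)

/-! ### Auxiliary infrastructure -/

section Aux

open scoped InnerProductSpace

/-- Column of a matrix as a Euclidean vector. -/
noncomputable def colE {m n : ℕ} (A : Matrix (Fin m) (Fin n) ℂ) (j : Fin n) :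
    EuclideanSpace ℂ (Fin m) := WithLp.toLp 2 (fun p => A p j)

lemma appE_norm_le {m n : ℕ} (A : Matrix (Fin m) (Fin n) ℂ) (v : EuclideanSpace ℂ (Fin n)) :
    ‖appE A v‖ ≤ ‖A‖ * ‖v‖ := Matrix.l2_opNorm_mulVec A v

lemma appE_one {n : ℕ} (v : EuclideanSpace ℂ (Fin n)) : appE 1 v = v := by
  ext p; simp [appE, Matrix.toEuclideanLin_apply, Matrix.one_mulVec]

lemma appE_mulE {m n l : ℕ} (A : Matrix (Fin m) (Fin n) ℂ) (B : Matrix (Fin n) (Fin l) ℂ) (v) :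
    appE (A * B) v = appE A (appE B v) := by
  simp [appE, Matrix.toEuclideanLin_apply, Matrix.mulVec_mulVec]

lemma appE_matsub {m n : ℕ} (A B : Matrix (Fin m) (Fin n) ℂ) (v : EuclideanSpace ℂ (Fin n)) :
    appE (A - B) v = appE A v - appE B v := by
  simp [appE, map_sub, LinearMap.sub_apply]

lemma appE_sub {m n : ℕ} (A : Matrix (Fin m) (Fin n) ℂ) (u v : EuclideanSpace ℂ (Fin n)) :
    appE A (u - v) = appE A u - appE A v := by simp [appE]

lemma opNorm_le_of {m n : ℕ} (A : Matrix (Fin m) (Fin n) ℂ) {c : ℝ} (hc : 0 ≤ c)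
    (h : ∀ v, ‖appE A v‖ ≤ c * ‖v‖) : ‖A‖ ≤ c := by
  rw [Matrix.l2_opNorm_def]
  exact ContinuousLinearMap.opNorm_le_bound _ hc h

lemma coord_le_norm {n : ℕ} (v : EuclideanSpace ℂ (Fin n)) (j : Fin n) : ‖v j‖ ≤ ‖v‖ := by
  have h1 : ‖v j‖ ^ 2 ≤ ∑ i, ‖v i‖ ^ 2 :=
    Finset.single_le_sum (fun i _ => sq_nonneg ‖v i‖) (Finset.mem_univ j)
  rw [EuclideanSpace.norm_eq v]
  calc ‖v j‖ = Real.sqrt (‖v j‖ ^ 2) := (Real.sqrt_sq (norm_nonneg _)).symm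
  _ ≤ Real.sqrt (∑ i, ‖v i‖ ^ 2) := Real.sqrt_le_sqrt h1

lemma appE_eq_sum {m n : ℕ} (A : Matrix (Fin m) (Fin n) ℂ) (v : EuclideanSpace ℂ (Fin n)) :
    appE A v = ∑ j, v j • colE A j := by
  ext p
  have h2 : (∑ j, v j • colE A j) p = ∑ j, v j * A p j := by
    have := map_sum (EuclideanSpace.proj (𝕜 := ℂ) p) (fun j => v j • colE A j) Finset.univ
    simp only [EuclideanSpace.proj, PiLp.proj_apply, PiLp.smul_apply, smul_eq_mul, colE] at this
    exact this
  simp only [appE, Matrix.toEuclideanLin_apply]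
  change (A.mulVec fun j => v j) p = _
  rw [Matrix.mulVec, dotProduct, h2]
  exact Finset.sum_congr rfl fun j _ => mul_comm _ _

lemma norm_matrix_le_sum_cols {m n : ℕ} (A : Matrix (Fin m) (Fin n) ℂ) :
    ‖A‖ ≤ ∑ j, ‖colE A j‖ := by
  refine opNorm_le_of A (Finset.sum_nonneg fun j _ => norm_nonneg _) fun v => ?_
  rw [appE_eq_sum]
  calc ‖∑ j, v j • colE A j‖ ≤ ∑ j, ‖v j • colE A j‖ := norm_sum_le _ _
  _ ≤ ∑ j, ‖colE A j‖ * ‖v‖ := by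
      refine Finset.sum_le_sum fun j _ => ?_
      rw [norm_smul, mul_comm]
      exact mul_le_mul_of_nonneg_left (coord_le_norm v j) (norm_nonneg _)
  _ = (∑ j, ‖colE A j‖) * ‖v‖ := (Finset.sum_mul _ _ _).symm

open ComplexOrder in
lemma isUnit_gram {N k : ℕ} (W : Matrix (Fin N) (Fin k) ℂ) (h : W.rank = k) :
    IsUnit (Wᴴ * W).det := by
  have h1 : (Wᴴ * W).rank = k := by rw [Matrix.rank_conjTranspose_mul_self]; exact h
  rw [← Matrix.isUnit_iff_isUnit_det, ← Matrix.mulVec_surjective_iff_isUnit]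
  have : LinearMap.range (Wᴴ * W).mulVecLin = ⊤ := by
    apply Submodule.eq_top_of_finrank_eq
    rw [← Matrix.rank] at *
    simp [h1]
  intro y
  have := this ▸ Submodule.mem_top (x := y) (R := ℂ)
  obtain ⟨v, hv⟩ := LinearMap.mem_range.mp this
  exact ⟨v, hv⟩

lemma pinv_mul {N k : ℕ} (W : Matrix (Fin N) (Fin k) ℂ) (h : IsUnit (Wᴴ * W).det) :
    pinv W * W = 1 := by
  rw [pinv, Matrix.mul_assoc, Matrix.nonsing_inv_mul _ h]

lemma gram_self_adjoint {N k : ℕ} (W : Matrix (Fin N) (Fin k) ℂ) :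
    (W * pinv W)ᴴ = W * pinv W := by
  rw [pinv, Matrix.conjTranspose_mul, Matrix.conjTranspose_mul, Matrix.conjTranspose_conjTranspose,
      Matrix.conjTranspose_nonsing_inv, Matrix.conjTranspose_mul,
      Matrix.conjTranspose_conjTranspose, Matrix.mul_assoc]

lemma proj_idem {N k : ℕ} (W : Matrix (Fin N) (Fin k) ℂ) (h : IsUnit (Wᴴ * W).det) :
    (W * pinv W) * (W * pinv W) = W * pinv W := by
  have h1 : pinv W * W = 1 := pinv_mul W h
  calc (W * pinv W) * (W * pinv W) = W * ((pinv W * W) * pinv W) := by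
        simp only [Matrix.mul_assoc]
  _ = W * pinv W := by rw [h1, Matrix.one_mul]

lemma proj_norm_le {N k : ℕ} (W : Matrix (Fin N) (Fin k) ℂ) (h : IsUnit (Wᴴ * W).det)
    (x : EuclideanSpace ℂ (Fin N)) : ‖appE (W * pinv W) x‖ ≤ ‖x‖ := by
  set P := W * pinv W with hP
  set T := Matrix.toEuclideanLin P with hT
  have hTx : appE P x = T x := rfl
  have key : ⟪T x, T x⟫_ℂ = ⟪x, T x⟫_ℂ := by
    have h1 : ⟪x, LinearMap.adjoint T (T x)⟫_ℂ = ⟪T x, T x⟫_ℂ :=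
      LinearMap.adjoint_inner_right T x (T x)
    have h2 : LinearMap.adjoint T (T x) = T x := by
      rw [hT, ← Matrix.toEuclideanLin_conjTranspose_eq_adjoint, gram_self_adjoint, ← hP]
      have h3 : Matrix.toEuclideanLin P (Matrix.toEuclideanLin P x)
          = Matrix.toEuclideanLin (P * P) x := (appE_mulE P P x).symm
      rw [h3, proj_idem W h]
    rw [h2] at h1
    exact h1.symm
  have hnorm : ‖T x‖ ^ 2 = RCLike.re ⟪T x, T x⟫_ℂ := by
    rw [← inner_self_eq_norm_sq (𝕜 := ℂ)]
  by_cases hz : T x = 0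
  · rw [hTx, hz]; simp
  · have h3 : ‖T x‖ ^ 2 ≤ ‖x‖ * ‖T x‖ := by
      rw [hnorm, key]
      calc RCLike.re ⟪x, T x⟫_ℂ ≤ ‖⟪x, T x⟫_ℂ‖ := RCLike.re_le_norm _
      _ ≤ ‖x‖ * ‖T x‖ := norm_inner_le_norm _ _
    have h4 : 0 < ‖T x‖ := norm_pos_iff.mpr hz
    rw [hTx]
    nlinarith

lemma pinv_perturb {N k : ℕ} (Wm Wt : Matrix (Fin N) (Fin k) ℂ)
    (hm : IsUnit (Wmᴴ * Wm).det) (ht : IsUnit (Wtᴴ * Wt).det) {Δ₀ : ℝ}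
    (hΔ : ‖pinv Wt‖ * ‖Wm - Wt‖ ≤ Δ₀) (y : EuclideanSpace ℂ (Fin N)) :
    (1 - Δ₀) * ‖appE (pinv Wm) y‖ ≤ ‖pinv Wt‖ * ‖y‖ := by
  set z := appE (pinv Wm) y with hz
  have h1 : z = appE (pinv Wt) (appE Wt z) := by
    rw [← appE_mulE, pinv_mul Wt ht, appE_one]
  have h2 : ‖appE Wt z‖ ≤ ‖y‖ + ‖Wm - Wt‖ * ‖z‖ := by
    have e1 : appE Wt z = appE Wm z - appE (Wm - Wt) z := by
      rw [appE_matsub]; abel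
    have e2 : appE Wm z = appE (Wm * pinv Wm) y := by rw [appE_mulE]
    calc ‖appE Wt z‖ ≤ ‖appE Wm z‖ + ‖appE (Wm - Wt) z‖ := by
          rw [e1]; exact norm_sub_le _ _
    _ ≤ ‖y‖ + ‖Wm - Wt‖ * ‖z‖ := by
        have h5 := proj_norm_le Wm hm y
        rw [e2]
        exact add_le_add h5 (appE_norm_le _ _)
  have h3 : ‖z‖ ≤ ‖pinv Wt‖ * (‖y‖ + ‖Wm - Wt‖ * ‖z‖) := by
    calc ‖z‖ = ‖appE (pinv Wt) (appE Wt z)‖ := by rw [← h1]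
    _ ≤ ‖pinv Wt‖ * ‖appE Wt z‖ := appE_norm_le _ _
    _ ≤ ‖pinv Wt‖ * (‖y‖ + ‖Wm - Wt‖ * ‖z‖) :=
        mul_le_mul_of_nonneg_left h2 (norm_nonneg _)
  have h4 : ‖pinv Wt‖ * ‖Wm - Wt‖ * ‖z‖ ≤ Δ₀ * ‖z‖ :=
    mul_le_mul_of_nonneg_right hΔ (norm_nonneg _)
  nlinarith [norm_nonneg z, norm_nonneg y, norm_nonneg (pinv Wt)]

/-- The constant `∑ (j+1) L^j`. -/
noncomputable def Sgeom (L : ℝ) : ℝ := ∑' j : ℕ, ((j : ℝ) + 1) * L ^ j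

lemma Sgeom_summable {L : ℝ} (h0 : 0 ≤ L) (h1 : L < 1) :
    Summable (fun j : ℕ => ((j : ℝ) + 1) * L ^ j) := by
  have hs1 : Summable (fun j : ℕ => (j : ℝ) * L ^ j) := by
    have := summable_pow_mul_geometric_of_norm_lt_one (R := ℝ) 1
      (r := L) (by rwa [Real.norm_eq_abs, abs_of_nonneg h0])
    simpa using this
  have hs2 : Summable (fun j : ℕ => L ^ j) := summable_geometric_of_lt_one h0 h1
  have := hs1.add hs2
  convert this using 2 with j
  ring

lemma sum_jgeom_le {L : ℝ} (h0 : 0 ≤ L) (h1 : L < 1) (k : ℕ) :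
    ∑ j ∈ Finset.range k, ((j : ℝ) + 1) * L ^ j ≤ Sgeom L :=
  Summable.sum_le_tsum _ (fun j _ => by positivity) (Sgeom_summable h0 h1)

lemma one_le_Sgeom {L : ℝ} (h0 : 0 ≤ L) (h1 : L < 1) : 1 ≤ Sgeom L := by
  have := sum_jgeom_le h0 h1 1
  simpa using this

/-- Norm bound for a matrix with geometrically decaying columns. -/
lemma norm_le_of_cols {N k : ℕ} {L : ℝ} (h0 : 0 ≤ L) (h1 : L < 1)
    (A : Matrix (Fin N) (Fin k) ℂ) (c : ℝ) (hc : 0 ≤ c)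
    (h : ∀ j : Fin k, ‖colE A j‖ ≤ c * ((((j : ℕ) : ℝ)) + 1) * L ^ (j : ℕ)) :
    ‖A‖ ≤ c * Sgeom L := by
  calc ‖A‖ ≤ ∑ j, ‖colE A j‖ := norm_matrix_le_sum_cols A
  _ ≤ ∑ j : Fin k, c * ((((j : ℕ) : ℝ)) + 1) * L ^ (j : ℕ) :=
      Finset.sum_le_sum fun j _ => h j
  _ = c * ∑ j ∈ Finset.range k, (((j : ℝ)) + 1) * L ^ j := by
      rw [Finset.mul_sum, ← Fin.sum_univ_eq_sum_range]
      exact Finset.sum_congr rfl fun j _ => by ring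
  _ ≤ c * Sgeom L := mul_le_mul_of_nonneg_left (sum_jgeom_le h0 h1 k) hc

lemma clm_split1 {N : ℕ} (F : EuclideanSpace ℂ (Fin N) →L[ℂ] EuclideanSpace ℂ (Fin N)) (j : ℕ)
    (ε : EuclideanSpace ℂ (Fin N)) :
    (F ^ j * (F - 1)) ε = (F ^ (j + 1)) ε - (F ^ j) ε := by
  rw [ContinuousLinearMap.mul_apply, ContinuousLinearMap.sub_apply,
    ContinuousLinearMap.one_apply, map_sub, pow_succ, ContinuousLinearMap.mul_apply]

lemma clm_comm {N : ℕ} (F : EuclideanSpace ℂ (Fin N) →L[ℂ] EuclideanSpace ℂ (Fin N)) (j : ℕ) :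
    (F - 1) * (F ^ j * (F - 1)) = F ^ j * (F - 1) ^ 2 := by
  have hc : Commute (F - 1) (F ^ j) :=
    (((Commute.refl F).pow_right j)).sub_left (Commute.one_left _)
  rw [← mul_assoc, hc.eq, mul_assoc, ← sq]

lemma clm_split2' {N : ℕ} (F : EuclideanSpace ℂ (Fin N) →L[ℂ] EuclideanSpace ℂ (Fin N)) (j : ℕ) :
    (F ^ j * (F - 1) ^ 2 : EuclideanSpace ℂ (Fin N) →L[ℂ] EuclideanSpace ℂ (Fin N))
      = F ^ (j + 1) * (F - 1) - F ^ j * (F - 1) := by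
  rw [sq, pow_succ, mul_assoc, ← mul_sub, sub_mul, one_mul]

lemma clm_split2 {N : ℕ} (F : EuclideanSpace ℂ (Fin N) →L[ℂ] EuclideanSpace ℂ (Fin N)) (j : ℕ)
    (ε : EuclideanSpace ℂ (Fin N)) :
    (F ^ j * (F - 1) ^ 2 : EuclideanSpace ℂ (Fin N) →L[ℂ] EuclideanSpace ℂ (Fin N)) ε
      = ((F ^ (j + 2)) ε - (F ^ (j + 1)) ε) - ((F ^ (j + 1)) ε - (F ^ j) ε) := by
  rw [clm_split2' F j, ContinuousLinearMap.sub_apply, clm_split1, clm_split1]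

end Aux

set_option maxHeartbeats 4000000 in
theorem rre_mcmode_step_bound (L a η Δ₀ : ℝ)
    (hL0 : 0 < L) (hL1 : L < 1) (ha : 0 < a) (hη : 0 < η)
    (hΔ₀0 : 0 ≤ Δ₀) (hΔ₀1 : Δ₀ < 1) :
    ∃ τ : ℝ, 0 < τ ∧
      ∀ (N : ℕ), 1 ≤ N → ∀ (s : EuclideanSpace ℂ (Fin N)) (δ : ℝ), 0 < δ →
      ∀ (f : EuclideanSpace ℂ (Fin N) → EuclideanSpace ℂ (Fin N)), f s = s →
      (∀ x y : EuclideanSpace ℂ (Fin N),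
        ‖x - s‖ ≤ δ → ‖y - s‖ ≤ δ → ‖f x - f y‖ ≤ L * ‖x - y‖) →
      ∀ (F : EuclideanSpace ℂ (Fin N) →L[ℂ] EuclideanSpace ℂ (Fin N)), ‖F‖ ≤ L →
      (∀ x : EuclideanSpace ℂ (Fin N),
        ‖x - s‖ ≤ δ → ‖f x - s - F (x - s)‖ ≤ a * ‖x - s‖ ^ 2) →
      ∀ (x : ℕ → EuclideanSpace ℂ (Fin N)), ‖x 0 - s‖ ≤ δ →
      (∀ m, x (m + 1) = f (x m)) →
      ∀ n k : ℕ, 1 ≤ k → x n ≠ s →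
      (Wmat N k n x).rank = k → (WmatT N k F (x n - s)).rank = k →
      ‖pinv (WmatT N k F (x n - s))‖ * ‖x n - s‖ ≤ η →
      ‖pinv (WmatT N k F (x n - s))‖ * ‖Wmat N k n x - WmatT N k F (x n - s)‖ ≤ Δ₀ →
      sRREt N k n F s x = s →
      ‖sRRE N k n x - s‖ ≤
        τ * (L ^ n * ‖x 0 - s‖ + Cconst a L n * ‖x 0 - s‖ ^ 2) ^ 2 := by
  classical
  set S := Sgeom L with hSdef
  have hS1 : 1 ≤ S := one_le_Sgeom hL0.le hL1
  have hS0 : 0 < S := lt_of_lt_of_le one_pos hS1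
  have h1Δ : 0 < 1 - Δ₀ := by linarith
  have haL : 0 < a / L := div_pos ha hL0
  have h1L : 0 < 1 + L := by linarith
  obtain ⟨Cg, hCgdef⟩ : ∃ c : ℝ, c = (5 * (a / L) * S * (1 + L) * η + a) * η / (1 - Δ₀) :=
    ⟨_, rfl⟩
  have hc1 : 0 < 5 * (a / L) * S * (1 + L) * η + a := by
    have h5 := mul_pos (mul_pos (mul_pos (mul_pos (by norm_num : (0:ℝ) < 5) haL) hS0) h1L) hη
    linarith
  have hCg0 : 0 < Cg := by rw [hCgdef]; exact div_pos (mul_pos hc1 hη) h1Δ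
  obtain ⟨τ, hτdef⟩ : ∃ t : ℝ, t = 2 * (a / L) * S * (1 + L) * η + (1 + L) * S * Cg := ⟨_, rfl⟩
  have hτ0 : 0 < τ := by
    have t1 := mul_pos (mul_pos (mul_pos (mul_pos (by norm_num : (0:ℝ) < 2) haL) hS0) h1L) hη
    have t2 := mul_pos (mul_pos h1L hS0) hCg0
    rw [hτdef]; linarith
  refine ⟨τ, hτ0, ?_⟩
  intro N hN s δ hδ f hfix hLip F hFL hq0 x hx0 hiter n k hk hxn hrkW hrkWt hηh hΔh hst
  -- basic iteration estimates
  have hball : ∀ m, ‖x m - s‖ ≤ δ := by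
    intro m
    induction m with
    | zero => exact hx0
    | succ m ih =>
      have hs0 : ‖s - s‖ ≤ δ := by simp [hδ.le]
      have h1 := hLip (x m) s ih hs0
      rw [hfix] at h1
      rw [hiter m]
      calc ‖f (x m) - s‖ ≤ L * ‖x m - s‖ := h1
      _ ≤ 1 * δ := mul_le_mul hL1.le ih (norm_nonneg _) zero_le_one
      _ = δ := one_mul δ
  have hstep : ∀ m, ‖x (m + 1) - s‖ ≤ L * ‖x m - s‖ := by
    intro m
    have hs0 : ‖s - s‖ ≤ δ := by simp [hδ.le]
    have h1 := hLip (x m) s (hball m) hs0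
    rw [hfix] at h1
    rw [hiter m]; exact h1
  have hgeom : ∀ m j, ‖x (m + j) - s‖ ≤ L ^ j * ‖x m - s‖ := by
    intro m j
    induction j with
    | zero => simp
    | succ j ih =>
      calc ‖x (m + (j + 1)) - s‖ = ‖x ((m + j) + 1) - s‖ := rfl
      _ ≤ L * ‖x (m + j) - s‖ := hstep _
      _ ≤ L * (L ^ j * ‖x m - s‖) := mul_le_mul_of_nonneg_left ih hL0.le
      _ = L ^ (j + 1) * ‖x m - s‖ := by ring
  have hquad : ∀ m, ‖x (m + 1) - s - F (x m - s)‖ ≤ a * ‖x m - s‖ ^ 2 := fun m => by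
    rw [hiter m]; exact hq0 (x m) (hball m)
  have hFv : ∀ v : EuclideanSpace ℂ (Fin N), ‖F v‖ ≤ L * ‖v‖ := fun v =>
    le_trans (F.le_opNorm v) (mul_le_mul_of_nonneg_right hFL (norm_nonneg v))
  have he0 : (0:ℝ) ≤ ‖x n - s‖ := norm_nonneg _
  -- defect of the linearized iteration
  have hDb : ∀ j, ‖x (n + j) - s - (F ^ j) (x n - s)‖
      ≤ (a / L) * ((j : ℝ) * L ^ j) * ‖x n - s‖ ^ 2 := by
    intro j
    induction j with
    | zero => simp
    | succ j ih =>
      have hFD : F (x (n + j) - s - (F ^ j) (x n - s))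
          = F (x (n + j) - s) - (F ^ (j + 1)) (x n - s) := by
        rw [map_sub, pow_succ', ContinuousLinearMap.mul_apply]
      have hkey : x (n + (j + 1)) - s - (F ^ (j + 1)) (x n - s)
          = (x (n + j + 1) - s - F (x (n + j) - s))
            + F (x (n + j) - s - (F ^ j) (x n - s)) := by
        rw [hFD]
        show x (n + j + 1) - s - (F ^ (j + 1)) (x n - s) = _
        abel
      have h1 : ‖x (n + (j + 1)) - s - (F ^ (j + 1)) (x n - s)‖
          ≤ a * ‖x (n + j) - s‖ ^ 2 + L * ‖x (n + j) - s - (F ^ j) (x n - s)‖ := by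
        rw [hkey]
        calc ‖_ + _‖ ≤ ‖x (n + j + 1) - s - F (x (n + j) - s)‖
            + ‖F (x (n + j) - s - (F ^ j) (x n - s))‖ := norm_add_le _ _
        _ ≤ _ := add_le_add (hquad (n + j)) (hFv _)
      have h2 : ‖x (n + j) - s‖ ≤ L ^ j * ‖x n - s‖ := hgeom n j
      have h3 : L ^ j ≤ 1 := pow_le_one₀ hL0.le hL1.le
      have h4 : (0:ℝ) ≤ L ^ j := by positivity
      have h5 : ‖x (n + j) - s‖ ^ 2 ≤ L ^ j * ‖x n - s‖ ^ 2 := by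
        have h5a := pow_le_pow_left₀ (norm_nonneg (x (n + j) - s)) h2 2
        have h5c : (L ^ j) ^ 2 ≤ L ^ j := by rw [sq]; exact mul_le_of_le_one_left h4 h3
        calc ‖x (n + j) - s‖ ^ 2 ≤ (L ^ j * ‖x n - s‖) ^ 2 := h5a
        _ = (L ^ j) ^ 2 * ‖x n - s‖ ^ 2 := by ring
        _ ≤ L ^ j * ‖x n - s‖ ^ 2 := mul_le_mul_of_nonneg_right h5c (sq_nonneg _)
      have h6 : L * ‖x (n + j) - s - (F ^ j) (x n - s)‖
          ≤ L * ((a / L) * ((j : ℝ) * L ^ j) * ‖x n - s‖ ^ 2) :=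
        mul_le_mul_of_nonneg_left ih hL0.le
      have h7 : a * ‖x (n + j) - s‖ ^ 2 ≤ a * (L ^ j * ‖x n - s‖ ^ 2) :=
        mul_le_mul_of_nonneg_left h5 ha.le
      have h8 : a * (L ^ j * ‖x n - s‖ ^ 2) + L * ((a / L) * ((j : ℝ) * L ^ j) * ‖x n - s‖ ^ 2)
          = (a / L) * (((j : ℝ) + 1) * L ^ (j + 1)) * ‖x n - s‖ ^ 2 := by
        field_simp
        ring
      simp only [Nat.cast_add, Nat.cast_one]
      linarith
  -- abbreviations
  rw [sRREt] at hst
  rw [sRRE]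
  set Wm := Wmat N k n x with hWmdef
  set Wt := WmatT N k F (x n - s) with hWtdef
  set Um := Umat N k n x with hUmdef
  set Ut := UmatT N k F (x n - s) with hUtdef
  have hgram_m : IsUnit (Wmᴴ * Wm).det := isUnit_gram Wm hrkW
  have hgram_t : IsUnit (Wtᴴ * Wt).det := isUnit_gram Wt hrkWt
  have hL2 : ∀ j : ℕ, L ^ (j + 1) ≤ L ^ j := fun j => by
    rw [pow_succ]
    exact mul_le_of_le_one_right (by positivity) hL1.le
  have hL3 : ∀ j : ℕ, L ^ (j + 2) ≤ L ^ j := fun j => le_trans (hL2 (j+1)) (hL2 j)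
  -- norm bound for Um
  have hUmb : ‖Um‖ ≤ (1 + L) * ‖x n - s‖ * S := by
    refine norm_le_of_cols hL0.le hL1 Um ((1 + L) * ‖x n - s‖)
      (mul_nonneg h1L.le he0) fun j => ?_
    have hcol : colE Um j = (x (n + (j:ℕ) + 1) - s) - (x (n + (j:ℕ)) - s) :=
      (sub_sub_sub_cancel_right _ _ s).symm
    rw [hcol]
    have hb1 : ‖x (n + (j:ℕ) + 1) - s‖ ≤ L ^ ((j:ℕ) + 1) * ‖x n - s‖ := hgeom n ((j:ℕ)+1)
    have hb2 : ‖x (n + (j:ℕ)) - s‖ ≤ L ^ (j:ℕ) * ‖x n - s‖ := hgeom n (j:ℕ)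
    have h4 : (0:ℝ) ≤ L ^ (j:ℕ) := by positivity
    have hj0 : (0:ℝ) ≤ ((j:ℕ):ℝ) := Nat.cast_nonneg _
    calc ‖_ - _‖ ≤ ‖x (n + (j:ℕ) + 1) - s‖ + ‖x (n + (j:ℕ)) - s‖ := norm_sub_le _ _
    _ ≤ L ^ ((j:ℕ)+1) * ‖x n - s‖ + L ^ (j:ℕ) * ‖x n - s‖ := add_le_add hb1 hb2
    _ ≤ (1 + L) * ‖x n - s‖ * (((j:ℕ):ℝ) + 1) * L ^ (j:ℕ) := by
        rw [pow_succ]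
        nlinarith [mul_nonneg (mul_nonneg (mul_nonneg h1L.le h4) he0) hj0]
  -- norm bound for Um - Ut
  have hdU : ‖Um - Ut‖ ≤ 2 * (a / L) * ‖x n - s‖ ^ 2 * S := by
    refine norm_le_of_cols hL0.le hL1 _ (2 * (a / L) * ‖x n - s‖ ^ 2)
      (mul_nonneg (mul_nonneg (by norm_num) haL.le) (sq_nonneg _)) fun j => ?_
    have hcol : colE (Um - Ut) j
        = (x (n + (j:ℕ) + 1) - s - (F ^ ((j:ℕ)+1)) (x n - s))
          - (x (n + (j:ℕ)) - s - (F ^ (j:ℕ)) (x n - s)) := by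
      have h0 : colE (Um - Ut) j = colE Um j - colE Ut j := rfl
      have h1 : colE Ut j = (F ^ (j:ℕ) * (F - 1)) (x n - s) := rfl
      rw [h0, h1, clm_split1]
      show x (n + (j:ℕ) + 1) - x (n + (j:ℕ)) - _ = _
      abel
    rw [hcol]
    have hb1 := hDb ((j:ℕ)+1)
    have hb2 := hDb (j:ℕ)
    simp only [Nat.cast_add, Nat.cast_one] at hb1
    refine le_trans (norm_sub_le _ _) (le_trans (add_le_add hb1 hb2) ?_)
    have h4 : (0:ℝ) ≤ L ^ (j:ℕ) := by positivity
    have hj0 : (0:ℝ) ≤ ((j:ℕ):ℝ) := Nat.cast_nonneg _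
    have hL2' := hL2 (j:ℕ)
    nlinarith [mul_nonneg (mul_nonneg haL.le (sq_nonneg ‖x n - s‖))
        (mul_nonneg (by linarith : (0:ℝ) ≤ ((j:ℕ):ℝ) + 1)
          (by linarith : (0:ℝ) ≤ L ^ (j:ℕ) - L ^ ((j:ℕ)+1))),
      mul_nonneg (mul_nonneg haL.le (sq_nonneg ‖x n - s‖)) h4]
  -- norm bound for Wm - Wt
  have hdW : ‖Wm - Wt‖ ≤ 5 * (a / L) * ‖x n - s‖ ^ 2 * S := by
    refine norm_le_of_cols hL0.le hL1 _ (5 * (a / L) * ‖x n - s‖ ^ 2)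
      (mul_nonneg (mul_nonneg (by norm_num) haL.le) (sq_nonneg _)) fun j => ?_
    have hcol : colE (Wm - Wt) j
        = ((x (n + (j:ℕ) + 2) - s - (F ^ ((j:ℕ)+2)) (x n - s))
            - (x (n + (j:ℕ) + 1) - s - (F ^ ((j:ℕ)+1)) (x n - s)))
          - ((x (n + (j:ℕ) + 1) - s - (F ^ ((j:ℕ)+1)) (x n - s))
            - (x (n + (j:ℕ)) - s - (F ^ (j:ℕ)) (x n - s))) := by
      have h0 : colE (Wm - Wt) j = colE Wm j - colE Wt j := rfl
      have h1 : colE Wt j = (F ^ (j:ℕ) * (F - 1) ^ 2 :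
          EuclideanSpace ℂ (Fin N) →L[ℂ] EuclideanSpace ℂ (Fin N)) (x n - s) := rfl
      rw [h0, h1, clm_split2]
      show (x (n + (j:ℕ) + 2) - x (n + (j:ℕ) + 1)) - (x (n + (j:ℕ) + 1) - x (n + (j:ℕ))) - _ = _
      abel
    rw [hcol]
    have hb1 := hDb ((j:ℕ)+2)
    have hb2 := hDb ((j:ℕ)+1)
    have hb3 := hDb (j:ℕ)
    simp only [Nat.cast_add, Nat.cast_one, Nat.cast_ofNat] at hb1 hb2
    refine le_trans (norm_sub_le _ _)
      (le_trans (add_le_add (le_trans (norm_sub_le _ _) (add_le_add hb1 hb2))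
        (le_trans (norm_sub_le _ _) (add_le_add hb2 hb3))) ?_)
    have h4 : (0:ℝ) ≤ L ^ (j:ℕ) := by positivity
    have hj0 : (0:ℝ) ≤ ((j:ℕ):ℝ) := Nat.cast_nonneg _
    have hL2' := hL2 (j:ℕ)
    have hL3' := hL3 (j:ℕ)
    nlinarith [mul_nonneg (mul_nonneg haL.le (sq_nonneg ‖x n - s‖))
        (mul_nonneg (by linarith : (0:ℝ) ≤ ((j:ℕ):ℝ) + 2)
          (by linarith : (0:ℝ) ≤ L ^ (j:ℕ) - L ^ ((j:ℕ)+2))),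
      mul_nonneg (mul_nonneg haL.le (sq_nonneg ‖x n - s‖))
        (mul_nonneg (by linarith : (0:ℝ) ≤ ((j:ℕ):ℝ) + 1)
          (by linarith : (0:ℝ) ≤ L ^ (j:ℕ) - L ^ ((j:ℕ)+1))),
      mul_nonneg (mul_nonneg haL.le (sq_nonneg ‖x n - s‖))
        (mul_nonneg (by linarith : (0:ℝ) ≤ ((j:ℕ):ℝ) + 1) h4)]
  -- coefficient vectors
  set uu : EuclideanSpace ℂ (Fin N) := x (n + 1) - x n with huudef
  set ut : EuclideanSpace ℂ (Fin N) := (F - 1) (x n - s) with hutdef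
  set gt : EuclideanSpace ℂ (Fin k) := appE (pinv Wt) ut with hgtdef
  set gg : EuclideanSpace ℂ (Fin k) := appE (pinv Wm) uu with hggdef
  have hεrep : x n - s = appE Ut gt := by rw [← hst]; abel
  have hFU : ∀ z : EuclideanSpace ℂ (Fin k), (F - 1) (appE Ut z) = appE Wt z := by
    intro z
    rw [appE_eq_sum, appE_eq_sum, map_sum]
    refine Finset.sum_congr rfl fun j _ => ?_
    rw [map_smul]
    congr 1
    show (F - 1) (colE Ut j) = colE Wt j
    rw [show colE Ut j = (F ^ (j:ℕ) * (F - 1)) (x n - s) from rfl,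
      show colE Wt j = (F ^ (j:ℕ) * (F - 1) ^ 2 :
        EuclideanSpace ℂ (Fin N) →L[ℂ] EuclideanSpace ℂ (Fin N)) (x n - s) from rfl,
      ← ContinuousLinearMap.mul_apply, clm_comm]
  have hWg : appE Wt gt = ut := by
    rw [← hFU gt, ← hεrep, hutdef]
  have hutb : ‖ut‖ ≤ (1 + L) * ‖x n - s‖ := by
    rw [hutdef, ContinuousLinearMap.sub_apply, ContinuousLinearMap.one_apply]
    refine le_trans (norm_sub_le _ _) ?_
    have := hFv (x n - s)
    linarith
  have hβ0 : (0:ℝ) ≤ ‖pinv Wt‖ := norm_nonneg _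
  have hgtb : ‖gt‖ ≤ (1 + L) * η := by
    have h1 : ‖gt‖ ≤ ‖pinv Wt‖ * ‖ut‖ := appE_norm_le _ _
    have h2 : ‖pinv Wt‖ * ‖ut‖ ≤ ‖pinv Wt‖ * ((1 + L) * ‖x n - s‖) :=
      mul_le_mul_of_nonneg_left hutb hβ0
    nlinarith [hηh]
  -- difference of coefficient vectors
  have hgid : appE (pinv Wm) (appE Wm gt) = gt := by
    rw [← appE_mulE, pinv_mul Wm hgram_m, appE_one]
  have hgdiff : gt - gg = appE (pinv Wm) (appE Wm gt - uu) := by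
    rw [appE_sub, hgid, hggdef]
  have hutu : ‖ut - uu‖ ≤ a * ‖x n - s‖ ^ 2 := by
    have h1 : ut - uu = -(x (n + 1) - s - F (x n - s)) := by
      rw [hutdef, huudef, ContinuousLinearMap.sub_apply, ContinuousLinearMap.one_apply]
      abel
    rw [h1, norm_neg]
    exact hquad n
  have hyd : appE Wm gt - uu = appE (Wm - Wt) gt + (ut - uu) := by
    rw [appE_matsub, hWg]; abel
  have hyb : ‖appE Wm gt - uu‖
      ≤ 5 * (a / L) * ‖x n - s‖ ^ 2 * S * ((1 + L) * η) + a * ‖x n - s‖ ^ 2 := by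
    rw [hyd]
    refine le_trans (norm_add_le _ _) (add_le_add (le_trans (appE_norm_le _ _) ?_) hutu)
    exact mul_le_mul hdW hgtb (norm_nonneg _)
      (mul_nonneg (mul_nonneg (mul_nonneg (by norm_num) haL.le) (sq_nonneg _)) hS0.le)
  have hper := pinv_perturb Wm Wt hgram_m hgram_t hΔh (appE Wm gt - uu)
  rw [← hgdiff] at hper
  have hβy : ‖pinv Wt‖ * ‖appE Wm gt - uu‖
      ≤ (5 * (a / L) * S * (1 + L) * η + a) * η * ‖x n - s‖ := by
    have h1 := mul_le_mul_of_nonneg_left hyb hβ0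
    have h2 : ‖pinv Wt‖ * (5 * (a / L) * ‖x n - s‖ ^ 2 * S * ((1 + L) * η) + a * ‖x n - s‖ ^ 2)
        = ((5 * (a / L) * S * (1 + L) * η + a) * ‖x n - s‖) * (‖pinv Wt‖ * ‖x n - s‖) := by
      ring
    rw [h2] at h1
    have h3 : (0:ℝ) ≤ (5 * (a / L) * S * (1 + L) * η + a) * ‖x n - s‖ :=
      mul_nonneg hc1.le he0
    calc ‖pinv Wt‖ * ‖appE Wm gt - uu‖
        ≤ ((5 * (a / L) * S * (1 + L) * η + a) * ‖x n - s‖) * (‖pinv Wt‖ * ‖x n - s‖) := h1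
    _ ≤ ((5 * (a / L) * S * (1 + L) * η + a) * ‖x n - s‖) * η :=
        mul_le_mul_of_nonneg_left hηh h3
    _ = (5 * (a / L) * S * (1 + L) * η + a) * η * ‖x n - s‖ := by ring
  have hggb : ‖gt - gg‖ ≤ Cg * ‖x n - s‖ := by
    rw [hCgdef, div_mul_eq_mul_div, le_div_iff₀ h1Δ]
    nlinarith [hper, hβy]
  -- final decomposition
  have hvec : x n - appE Um gg - s = appE (Ut - Um) gt + appE Um (gt - gg) := by
    rw [appE_matsub, appE_sub]
    calc x n - appE Um gg - s = (x n - s) - appE Um gg := by abel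
    _ = appE Ut gt - appE Um gg := by rw [hεrep]
    _ = appE Ut gt - appE Um gt + (appE Um gt - appE Um gg) := by abel
  rw [hvec]
  have hfin1 : ‖appE (Ut - Um) gt + appE Um (gt - gg)‖
      ≤ ‖Um - Ut‖ * ‖gt‖ + ‖Um‖ * ‖gt - gg‖ := by
    refine le_trans (norm_add_le _ _) (add_le_add ?_ (appE_norm_le _ _))
    refine le_trans (appE_norm_le _ _) (le_of_eq ?_)
    rw [norm_sub_rev]
  refine le_trans hfin1 ?_
  have hAB : ‖Um - Ut‖ * ‖gt‖ + ‖Um‖ * ‖gt - gg‖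
      ≤ (2 * (a / L) * ‖x n - s‖ ^ 2 * S) * ((1 + L) * η)
        + ((1 + L) * ‖x n - s‖ * S) * (Cg * ‖x n - s‖) := by
    refine add_le_add (mul_le_mul hdU hgtb (norm_nonneg _) ?_)
      (mul_le_mul hUmb hggb (norm_nonneg _) ?_)
    · exact mul_nonneg (mul_nonneg (mul_nonneg (by norm_num) haL.le) (sq_nonneg _)) hS0.le
    · exact mul_nonneg (mul_nonneg h1L.le he0) hS0.le
  refine le_trans hAB ?_
  have hτe : (2 * (a / L) * ‖x n - s‖ ^ 2 * S) * ((1 + L) * η)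
      + ((1 + L) * ‖x n - s‖ * S) * (Cg * ‖x n - s‖) = τ * ‖x n - s‖ ^ 2 := by
    rw [hτdef]; ring
  rw [hτe]
  -- pass to the a-priori bound on ‖x n - s‖
  have hC0 : 0 ≤ Cconst a L n := by
    cases n with
    | zero => simp [Cconst]
    | succ m =>
      show 0 ≤ a * L ^ m * (1 - L ^ (m + 1)) / (1 - L)
      have h1 : L ^ (m + 1) ≤ 1 := pow_le_one₀ hL0.le hL1.le
      have h2 : (0:ℝ) ≤ L ^ m := by positivity
      have h3 : (0:ℝ) ≤ 1 - L := by linarith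
      have h4 : (0:ℝ) ≤ a * L ^ m * (1 - L ^ (m + 1)) := by
        apply mul_nonneg (mul_nonneg ha.le h2)
        linarith
      exact div_nonneg h4 h3
  have hen : ‖x n - s‖ ≤ L ^ n * ‖x 0 - s‖ := by
    have h1 := hgeom 0 n
    rwa [Nat.zero_add] at h1
  have hB : ‖x n - s‖ ≤ L ^ n * ‖x 0 - s‖ + Cconst a L n * ‖x 0 - s‖ ^ 2 := by
    linarith [hen, mul_nonneg hC0 (sq_nonneg ‖x 0 - s‖)]
  have hB2 := pow_le_pow_left₀ he0 hB 2
  exact mul_le_mul_of_nonneg_left hB2 hτ0.le
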